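/- arXiv:2009.09860 — 3 statements merged into one kernel-verified Lean document; each statement's English description precedes it below -/
import Mathlib

section
/- Let v : ℝ → (0,∞) be measurable with v bounded below by a positive constant c and ∫ (v − ln v − 1) dx ≤ e₀. Then ∫ (ln v)² dx ≤ C, where C depends only on c and e₀. -/
open MeasureTheory

/-- If `v ≥ c > 0` and `∫ (v − ln v − 1) dx ≤ e₀`, then `∫ (ln v)² dx ≤ C`
with `C` depending only on `c` and `e₀`. -/
theorem log_v_square_integral_bound (c e₀ : ℝ) (hc : 0 < c) :
    ∃ C : ℝ, ∀ v : ℝ → ℝ, Measurable v → (∀ x, c ≤ v x) →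
      (∫⁻ x, ENNReal.ofReal (v x - Real.log (v x) - 1) ≤ ENNReal.ofReal e₀) →
      ∫⁻ x, ENNReal.ofReal ((Real.log (v x))^2) ≤ ENNReal.ofReal C := by
  refine ⟨(4 + 4 / c ^ 2) * max e₀ 0, fun v hv hvc hint => ?_⟩
  set K : ℝ := 4 + 4 / c ^ 2 with hKdef
  have hK0 : (0 : ℝ) ≤ K := by positivity
  have key : ∀ t : ℝ, c ≤ t → (Real.log t) ^ 2 ≤ K * (t - Real.log t - 1) := by
    intro t hct
    have ht : 0 < t := lt_of_lt_of_le hc hct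
    set s := Real.sqrt t with hs
    have hs0 : 0 < s := Real.sqrt_pos.mpr ht
    have hs2 : s ^ 2 = t := Real.sq_sqrt ht.le
    have hlog : Real.log t = 2 * Real.log s := by
      rw [hs, Real.log_sqrt ht.le]; ring
    have hls : Real.log s ≤ s - 1 := Real.log_le_sub_one_of_pos hs0
    have hf : (s - 1) ^ 2 ≤ t - Real.log t - 1 := by
      rw [hlog, ← hs2]; nlinarith
    have hc2 : (0 : ℝ) < c ^ 2 := by positivity
    rcases le_or_gt 1 t with h1 | h1
    · -- t ≥ 1
      have hl0 : 0 ≤ Real.log t := Real.log_nonneg h1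
      have hl2 : Real.log t ≤ 2 * (s - 1) := by rw [hlog]; linarith
      have h4K : (4 : ℝ) ≤ K := le_add_of_nonneg_right (by positivity)
      nlinarith [sq_nonneg (s - 1)]
    · -- t < 1
      have hl0 : Real.log t ≤ 0 := Real.log_nonpos ht.le h1.le
      have hinv : Real.log t⁻¹ ≤ t⁻¹ - 1 := Real.log_le_sub_one_of_pos (by positivity)
      rw [Real.log_inv] at hinv
      -- -log t ≤ (1 - t)/t ≤ (1 - t)/c
      have hnl : -Real.log t ≤ (1 - t) / c := by
        have h1t : -Real.log t ≤ (1 - t) / t := by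
          rw [le_div_iff₀ ht]
          nlinarith [mul_le_mul_of_nonneg_right hinv ht.le, mul_inv_cancel₀ ht.ne']
        have h2t : (1 - t) / t ≤ (1 - t) / c := by
          apply div_le_div_of_nonneg_left (by linarith) hc hct
        linarith
      have hs1 : s ≤ 1 := by nlinarith
      -- (1 - t)^2 = (1-s)^2 (1+s)^2 ≤ 4 (1-s)^2
      have hsq : (1 - t) ^ 2 ≤ 4 * (s - 1) ^ 2 := by
        rw [← hs2]; nlinarith [sq_nonneg ((1 - s) * (1 + s))]
      -- (log t)^2 ≤ (1-t)^2 / c^2 ≤ 4 (s-1)^2 / c^2 ≤ (4/c^2) f ≤ K f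
      have hf0 : 0 ≤ t - Real.log t - 1 := (sq_nonneg _).trans hf
      have step : (Real.log t) ^ 2 ≤ (4 / c ^ 2) * (t - Real.log t - 1) := by
        have hA : (Real.log t) ^ 2 ≤ (4 / c ^ 2) * (s - 1) ^ 2 := by
          calc (Real.log t) ^ 2 ≤ ((1 - t) / c) ^ 2 := by
                have h0 : 0 ≤ -Real.log t := by linarith
                nlinarith
            _ = (1 - t) ^ 2 / c ^ 2 := by ring
            _ ≤ (4 * (s - 1) ^ 2) / c ^ 2 := by gcongr
            _ = (4 / c ^ 2) * (s - 1) ^ 2 := by ring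
        exact hA.trans (mul_le_mul_of_nonneg_left hf (by positivity))
      have hKge : 4 / c ^ 2 ≤ K := le_add_of_nonneg_left (by norm_num)
      exact step.trans (mul_le_mul_of_nonneg_right hKge hf0)
  calc ∫⁻ x, ENNReal.ofReal ((Real.log (v x)) ^ 2)
      ≤ ∫⁻ x, ENNReal.ofReal K * ENNReal.ofReal (v x - Real.log (v x) - 1) := by
        apply lintegral_mono; intro x
        dsimp only
        rw [← ENNReal.ofReal_mul hK0]
        exact ENNReal.ofReal_le_ofReal (key _ (hvc x))
    _ = ENNReal.ofReal K * ∫⁻ x, ENNReal.ofReal (v x - Real.log (v x) - 1) :=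
        lintegral_const_mul' _ _ ENNReal.ofReal_ne_top
    _ ≤ ENNReal.ofReal K * ENNReal.ofReal e₀ := mul_le_mul_right hint _
    _ ≤ ENNReal.ofReal K * ENNReal.ofReal (max e₀ 0) :=
        mul_le_mul_right (ENNReal.ofReal_le_ofReal (le_max_left _ _)) _
    _ = ENNReal.ofReal (K * max e₀ 0) := (ENNReal.ofReal_mul hK0).symm
end

section
/- Let v : ℝ → (0,∞) be locally absolutely continuous with ∫_{v>2} v dx ≤ K and ∫ (v_x/v)² dx < ∞. Then for every x, (v(x) − 2)₊² ≤ C·K·(1 + sup v)·∫ (v_x/v)² dx for an absolute constant C; consequently sup_x v(x) ≤ C' (1 + ∫ ((ln v)_x)² dx) with C' depending only on K. -/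
open MeasureTheory

lemma key_bound (K : ℝ) (hK : 0 < K) (v v' : ℝ → ℝ)
    (hv : ∀ x, 0 < v x) (hd : ∀ x, HasDerivAt v (v' x) x)
    (hb : BddAbove (Set.range v))
    (hint : IntegrableOn v {x : ℝ | 2 < v x} volume)
    (hKle : (∫ x in {x : ℝ | 2 < v x}, v x) ≤ K)
    (hI : Integrable (fun x => (v' x / v x)^2) volume)
    (x : ℝ) (hx : 2 < v x) :
    v x - 2 ≤ Real.sqrt (K * (⨆ y, v y) * ∫ t, (v' t / v t)^2) := by
  set S := ⨆ y, v y with hS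
  set I := ∫ t, (v' t / v t)^2 with hIdef
  clear_value S I
  have hcont : Continuous v := by
    rw [continuous_iff_continuousAt]; exact fun y => (hd y).continuousAt
  have hSx : v x ≤ S := by rw [hS]; exact le_ciSup hb x
  have hSpos : 0 < S := lt_of_lt_of_le (hv x) hSx
  have hvS : ∀ y, v y ≤ S := by rw [hS]; exact fun y => le_ciSup hb y
  have hInn : 0 ≤ I := by rw [hIdef]; exact integral_nonneg fun t => sq_nonneg _
  have hv'eq : v' = deriv v := funext fun y => ((hd y).deriv).symm
  have hv'meas : Measurable v' := hv'eq ▸ measurable_deriv v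
  set A : Set ℝ := {x : ℝ | 2 < v x} with hA
  have hAmeas : MeasurableSet A := measurableSet_lt measurable_const hcont.measurable
  -- A has finite measure
  have hgint : Integrable (A.indicator v) volume := by
    rwa [integrable_indicator_iff hAmeas]
  have hAfin : volume A < ⊤ := by
    have h2 : volume {a : ℝ | 2 ≤ A.indicator v a} < ⊤ :=
      hgint.measure_ge_lt_top two_pos
    refine lt_of_le_of_lt (measure_mono ?_) h2
    intro y hy
    simp only [Set.mem_setOf_eq, Set.indicator_of_mem hy]
    exact le_of_lt hy
  have hAle : (volume A).toReal ≤ K / 2 := by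
    have h2 : 2 * (volume A).toReal ≤ ∫ y in A, v y :=
      setIntegral_ge_of_const_le_real hAmeas hAfin.ne (fun y hy => le_of_lt hy) hint
    linarith
  -- find a point x₀ ≤ x with v x₀ ≤ 2
  obtain ⟨x₀, hx₀mem, hx₀⟩ : ∃ x₀ ∈ Set.Icc (x - ((volume A).toReal + 1)) x, v x₀ ≤ 2 := by
    by_contra hcon
    push_neg at hcon
    have hsub : Set.Icc (x - ((volume A).toReal + 1)) x ⊆ A :=
      fun y hy => hcon y hy
    have hle : volume (Set.Icc (x - ((volume A).toReal + 1)) x) ≤ volume A :=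
      measure_mono hsub
    rw [Real.volume_Icc] at hle
    have : (volume A).toReal + 1 ≤ (volume A).toReal := by
      have h1 : ENNReal.ofReal ((volume A).toReal + 1) ≤ volume A := by
        convert hle using 2; ring
      calc (volume A).toReal + 1 = (ENNReal.ofReal ((volume A).toReal + 1)).toReal := by
            rw [ENNReal.toReal_ofReal]; positivity
        _ ≤ (volume A).toReal := ENNReal.toReal_mono hAfin.ne h1
    linarith
  have hx₀x : x₀ ≤ x := hx₀mem.2
  -- last point before x where v ≤ 2
  set T : Set ℝ := Set.Icc x₀ x ∩ {y | v y ≤ 2} with hT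
  have hTclosed : IsClosed T := isClosed_Icc.inter (isClosed_le hcont continuous_const)
  have hTne : T.Nonempty := ⟨x₀, ⟨le_refl _, hx₀x⟩, hx₀⟩
  have hTbdd : BddAbove T := ⟨x, fun y hy => hy.1.2⟩
  set s := sSup T with hs
  have hsT : s ∈ T := hTclosed.csSup_mem hTne hTbdd
  have hvs : v s ≤ 2 := hsT.2
  have hsx : s ≤ x := hsT.1.2
  have hx₀s : x₀ ≤ s := hsT.1.1
  have hsxlt : s < x := lt_of_le_of_ne hsx (fun h => by rw [h] at hvs; linarith)
  have hgt : ∀ y ∈ Set.Ioc s x, 2 < v y := by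
    intro y hy
    by_contra hcon
    push_neg at hcon
    have : y ∈ T := ⟨⟨le_trans hx₀s hy.1.le, hy.2⟩, hcon⟩
    exact absurd (le_csSup hTbdd this) (not_le.mpr hy.1)
  -- integrability of v' on Ioc s x
  have hIoc : IntegrableOn (fun t => (v' t / v t)^2) (Set.Ioc s x) volume := hI.integrableOn
  have hv'int : IntegrableOn v' (Set.Ioc s x) volume := by
    refine Integrable.mono' (g := fun t => S / 2 * (1 + (v' t / v t)^2)) ?_ hv'meas.aestronglyMeasurable ?_
    · exact (((integrableOn_const_iff (C := (1:ℝ))).mpr (Or.inr measure_Ioc_lt_top)).add hIoc).const_mul _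
    · filter_upwards with t
      have hvt := hv t
      have h1 : v' t = (v' t / v t) * v t := by field_simp
      have h2 : |v' t| = |v' t / v t| * v t := by
        rw [abs_div, abs_of_pos hvt, div_mul_cancel₀ _ hvt.ne']
      rw [Real.norm_eq_abs, h2]
      have h3 : |v' t / v t| * v t ≤ |v' t / v t| * S := by
        exact mul_le_mul_of_nonneg_left (hvS t) (abs_nonneg _)
      have h4 : |v' t / v t| ≤ (1 + (v' t / v t)^2) / 2 := by
        nlinarith [sq_nonneg (|v' t / v t| - 1), sq_abs (v' t / v t)]
      nlinarith [abs_nonneg (v' t / v t), sq_nonneg (v' t / v t)]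
  have hv'ii : IntervalIntegrable v' volume s x := by
    rw [intervalIntegrable_iff_integrableOn_Ioc_of_le hsx]
    exact hv'int
  have hftc : ∫ y in s..x, v' y = v x - v s :=
    intervalIntegral.integral_eq_sub_of_hasDerivAt (fun y _ => hd y) hv'ii
  -- v integrable on Ioc, and ∫_{Ioc} v ≤ K
  have hvIoc : IntegrableOn v (Set.Ioc s x) volume := hcont.integrableOn_Ioc
  have hvIocle : ∫ y in Set.Ioc s x, v y ≤ K := by
    refine le_trans (setIntegral_mono_set hint ?_ ?_) hKle
    · filter_upwards with y using le_of_lt (hv y)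
    · exact Filter.Eventually.of_forall (fun y hy => hgt y hy)
  have hv2Ioc : IntegrableOn (fun y => (v y)^2) (Set.Ioc s x) volume :=
    (hcont.pow 2).integrableOn_Ioc
  have hv2le : ∫ y in Set.Ioc s x, (v y)^2 ≤ S * K := by
    have h1 : ∫ y in Set.Ioc s x, (v y)^2 ≤ ∫ y in Set.Ioc s x, S * v y := by
      refine setIntegral_mono_on hv2Ioc (hvIoc.const_mul S) measurableSet_Ioc ?_
      intro y _
      have := hv y
      nlinarith [hvS y]
    rw [integral_const_mul] at h1
    calc ∫ y in Set.Ioc s x, (v y)^2 ≤ S * ∫ y in Set.Ioc s x, v y := h1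
      _ ≤ S * K := mul_le_mul_of_nonneg_left hvIocle hSpos.le
  have hqle : ∫ y in Set.Ioc s x, (v' y / v y)^2 ≤ I := by
    rw [hIdef]
    exact setIntegral_le_integral hI (Filter.Eventually.of_forall fun t => sq_nonneg _)
  -- the ε-bound
  have hmain : ∀ ε : ℝ, 0 < ε → v x - 2 ≤ ε / 2 * I + 1 / (2 * ε) * (S * K) := by
    intro ε hε
    have hpt : ∀ y, v' y ≤ ε / 2 * (v' y / v y)^2 + 1 / (2 * ε) * (v y)^2 := by
      intro y
      have hvy := hv y
      have h1 : v' y = (v' y / v y) * v y := by field_simp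
      have h2 : 0 ≤ (ε * (v' y / v y) - v y)^2 / (2 * ε) := by positivity
      have h3 : (ε * (v' y / v y) - v y)^2 / (2 * ε)
          = ε / 2 * (v' y / v y)^2 + 1 / (2 * ε) * (v y)^2 - (v' y / v y) * v y := by
        field_simp
        ring
      calc v' y = (v' y / v y) * v y := h1
        _ ≤ ε / 2 * (v' y / v y)^2 + 1 / (2 * ε) * (v y)^2 := by linarith
    have hrhsint : IntegrableOn
        (fun y => ε / 2 * (v' y / v y)^2 + 1 / (2 * ε) * (v y)^2) (Set.Ioc s x) volume :=
      (hIoc.const_mul _).add (hv2Ioc.const_mul _)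
    have h2 : ∫ y in s..x, v' y ≤
        ∫ y in s..x, (ε / 2 * (v' y / v y)^2 + 1 / (2 * ε) * (v y)^2) := by
      refine intervalIntegral.integral_mono_on hsx hv'ii ?_ (fun y _ => hpt y)
      rw [intervalIntegrable_iff_integrableOn_Ioc_of_le hsx]
      exact hrhsint
    rw [hftc] at h2
    rw [intervalIntegral.integral_of_le hsx,
      integral_add (hIoc.const_mul _) (hv2Ioc.const_mul _),
      integral_const_mul, integral_const_mul] at h2
    have h3 : ε / 2 * ∫ y in Set.Ioc s x, (v' y / v y)^2 ≤ ε / 2 * I :=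
      mul_le_mul_of_nonneg_left hqle (by positivity)
    have h4 : 1 / (2 * ε) * ∫ y in Set.Ioc s x, (v y)^2 ≤ 1 / (2 * ε) * (S * K) :=
      mul_le_mul_of_nonneg_left hv2le (by positivity)
    linarith
  -- conclude
  have hKSnn : 0 ≤ K * S := by positivity
  rcases eq_or_lt_of_le hInn with hI0 | hIpos
  · exfalso
    have hvx2 : 0 < v x - 2 := by linarith
    have := hmain (S * K / (v x - 2)) (div_pos (mul_pos hSpos hK) hvx2)
    rw [← hI0] at this
    have h5 : 1 / (2 * (S * K / (v x - 2))) * (S * K) = (v x - 2) / 2 := by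
      rw [div_mul_eq_mul_div, one_mul]
      rw [div_eq_iff (by positivity)]
      field_simp
    rw [h5] at this
    linarith
  · set ε := Real.sqrt (K * S) / Real.sqrt I with hε
    have hp : 0 < Real.sqrt (K * S) := Real.sqrt_pos.mpr (by positivity)
    have hq : 0 < Real.sqrt I := Real.sqrt_pos.mpr hIpos
    have hεpos : 0 < ε := by positivity
    have hp2 : Real.sqrt (K * S) ^ 2 = K * S := Real.sq_sqrt (by positivity)
    have hq2 : Real.sqrt I ^ 2 = I := Real.sq_sqrt hInn
    have e1 : ε / 2 * I = Real.sqrt (K * S) * Real.sqrt I / 2 := by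
      rw [hε]
      field_simp
      linear_combination (-1) * hq2
    have e2 : 1 / (2 * ε) * (S * K) = Real.sqrt (K * S) * Real.sqrt I / 2 := by
      have hSK : S * K = Real.sqrt (K * S) ^ 2 := by rw [hp2]; ring
      rw [hε, hSK]
      field_simp
    have hval : ε / 2 * I + 1 / (2 * ε) * (S * K) = Real.sqrt (K * S) * Real.sqrt I := by
      rw [e1, e2]; ring
    have := hmain ε hεpos
    rw [hval] at this
    calc v x - 2 ≤ Real.sqrt (K * S) * Real.sqrt I := this
      _ = Real.sqrt (K * S * I) := (Real.sqrt_mul hKSnn I).symm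

/-- If `v > 0` is differentiable with `∫_{v>2} v ≤ K` and `(v_x/v) ∈ L²`, then
`(v(x) − 2)₊² ≤ C·K·(1 + sup v)·∫ (v_x/v)²` for an absolute constant `C`, and
consequently `sup v ≤ C' (1 + ∫ ((ln v)_x)²)` with `C'` depending only on `K`. -/
theorem sup_v_bound :
    ∃ C : ℝ, 0 < C ∧ ∀ K : ℝ, 0 < K → ∃ C' : ℝ, 0 < C' ∧
      ∀ (v v' : ℝ → ℝ), (∀ x, 0 < v x) → (∀ x, HasDerivAt v (v' x) x) →
        BddAbove (Set.range v) →
        IntegrableOn v {x : ℝ | 2 < v x} volume →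
        (∫ x in {x : ℝ | 2 < v x}, v x) ≤ K →
        Integrable (fun x => (v' x / v x)^2) volume →
        (∀ x : ℝ, (max (v x - 2) 0)^2
            ≤ C * K * (1 + ⨆ y, v y) * ∫ x, (v' x / v x)^2) ∧
        (⨆ y, v y) ≤ C' * (1 + ∫ x, (v' x / v x)^2) := by
  refine ⟨1, one_pos, fun K hK => ⟨5 + K, by linarith, fun v v' hv hd hb hint hKle hI => ?_⟩⟩
  set S := ⨆ y, v y with hS
  set I := ∫ t, (v' t / v t)^2 with hIdef
  have hSpos : 0 < S := lt_of_lt_of_le (hv 0) (by rw [hS]; exact le_ciSup hb 0)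
  have hInn : 0 ≤ I := by rw [hIdef]; exact integral_nonneg fun t => sq_nonneg _
  have key : ∀ x : ℝ, (max (v x - 2) 0)^2 ≤ K * S * I := by
    intro x
    by_cases hx : 2 < v x
    · have h1 : v x - 2 ≤ Real.sqrt (K * S * I) := by
        rw [hS, hIdef]
        exact key_bound K hK v v' hv hd hb hint hKle hI x hx
      have h0 : 0 ≤ v x - 2 := by linarith
      rw [max_eq_left h0]
      calc (v x - 2)^2 ≤ Real.sqrt (K * S * I)^2 := pow_le_pow_left₀ h0 h1 2
        _ = K * S * I := Real.sq_sqrt (by positivity)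
    · rw [max_eq_right (by linarith)]
      have h00 : (0:ℝ)^2 = 0 := by norm_num
      rw [h00]; positivity
  constructor
  · intro x
    calc (max (v x - 2) 0)^2 ≤ K * S * I := key x
      _ ≤ 1 * K * (1 + S) * I := by nlinarith
  · have hKSI : 0 ≤ K * S * I := by positivity
    have hsq : ∀ x : ℝ, v x ≤ 2 + Real.sqrt (K * S * I) := by
      intro x
      have h1 : max (v x - 2) 0 ≤ Real.sqrt (K * S * I) := by
        have h2 := key x
        have h0 : (0:ℝ) ≤ max (v x - 2) 0 := le_max_right _ _
        nlinarith [Real.sq_sqrt hKSI, Real.sqrt_nonneg (K * S * I)]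
      have := le_max_left (v x - 2) 0
      linarith
    have hSle : S ≤ 2 + Real.sqrt (K * S * I) := by
      rw [hS]; exact ciSup_le hsq
    have h2 : K * S * I ≤ (K * I) * (1 + S) := by nlinarith
    have h3 : Real.sqrt (K * S * I) ≤ Real.sqrt ((K * I) * (1 + S)) := Real.sqrt_le_sqrt h2
    have h4 : Real.sqrt ((K * I) * (1 + S)) = Real.sqrt (K * I) * Real.sqrt (1 + S) :=
      Real.sqrt_mul (by positivity) _
    have h5 : Real.sqrt (K * I) * Real.sqrt (1 + S) ≤ (K * I + (1 + S)) / 2 := by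
      nlinarith [sq_nonneg (Real.sqrt (K * I) - Real.sqrt (1 + S)),
        Real.sq_sqrt (show (0:ℝ) ≤ K * I by positivity),
        Real.sq_sqrt (show (0:ℝ) ≤ 1 + S by positivity)]
    have h6 : S ≤ 5 + K * I := by linarith [hSle, h3, h4 ▸ h3]
    nlinarith [hInn, hK.le]
end

section
/- Suppose y : [0,T] → [0,∞) is continuous, V : [0,T] → [0,∞) is integrable with ∫_0^T V(t) dt ≤ A, and y(t) ≤ C (2 + ∫_0^t V(s) y(s) ds) · ln(2 + ∫_0^t V(s) y(s) ds) for all t ∈ [0,T]. Then y is bounded on [0,T] by a constant depending only on C, A, T. -/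
open MeasureTheory intervalIntegral Filter Topology

/-- Logarithmic Grönwall inequality: if `y(t) ≤ C (2 + ∫_0^t V y) ln(2 + ∫_0^t V y)`
with `∫_0^T V ≤ A`, then `y` is bounded by a constant depending only on `C, A, T`. -/
theorem log_gronwall (C A T : ℝ) (hC : 0 < C) (hT : 0 < T) :
    ∃ M : ℝ, ∀ (y V : ℝ → ℝ),
      ContinuousOn y (Set.Icc 0 T) → (∀ t ∈ Set.Icc (0:ℝ) T, 0 ≤ y t) →
      (∀ t ∈ Set.Icc (0:ℝ) T, 0 ≤ V t) →
      IntervalIntegrable V volume 0 T →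
      IntervalIntegrable (fun s => V s * y s) volume 0 T →
      (∫ t in (0:ℝ)..T, V t) ≤ A →
      (∀ t ∈ Set.Icc (0:ℝ) T,
        y t ≤ C * (2 + ∫ s in (0:ℝ)..t, V s * y s)
                * Real.log (2 + ∫ s in (0:ℝ)..t, V s * y s)) →
      ∀ t ∈ Set.Icc (0:ℝ) T, y t ≤ M := by
  set Ψ : ℝ := 2 * Real.exp (4 * C * A) with hΨdef
  refine ⟨C * Real.exp Ψ * Ψ, ?_⟩
  intro y V hy hy0 hV0 hV hVy hVA hkey
  set g : ℝ → ℝ := fun s => V s * y s with hgdef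
  set z : ℝ → ℝ := fun t => 2 + ∫ s in (0:ℝ)..t, g s with hzdef
  set W : ℝ → ℝ := fun t => ∫ s in (0:ℝ)..t, V s with hWdef
  set ψ : ℝ → ℝ := fun t => 2 * Real.exp (4 * C * W t) with hψdef
  have huIcc : Set.uIcc (0:ℝ) T = Set.Icc 0 T := Set.uIcc_of_le hT.le
  -- integrability on subintervals
  have hsubIcc : ∀ a b : ℝ, a ∈ Set.Icc (0:ℝ) T → b ∈ Set.Icc (0:ℝ) T →
      Set.uIcc a b ⊆ Set.uIcc (0:ℝ) T := by
    intro a b ha hb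
    rw [huIcc]
    exact Set.uIcc_subset_Icc ha hb
  have hgsub : ∀ a b : ℝ, a ∈ Set.Icc (0:ℝ) T → b ∈ Set.Icc (0:ℝ) T →
      IntervalIntegrable g volume a b := fun a b ha hb => hVy.mono_set (hsubIcc a b ha hb)
  have hVsub : ∀ a b : ℝ, a ∈ Set.Icc (0:ℝ) T → b ∈ Set.Icc (0:ℝ) T →
      IntervalIntegrable V volume a b := fun a b ha hb => hV.mono_set (hsubIcc a b ha hb)
  have hg0 : ∀ s ∈ Set.Icc (0:ℝ) T, 0 ≤ g s := fun s hs =>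
    mul_nonneg (hV0 s hs) (hy0 s hs)
  -- z is the primitive plus 2
  have hzsplit : ∀ a b : ℝ, a ∈ Set.Icc (0:ℝ) T → b ∈ Set.Icc (0:ℝ) T →
      z b = z a + ∫ s in a..b, g s := by
    intro a b ha hb
    have := integral_add_adjacent_intervals (hgsub 0 a (Set.left_mem_Icc.2 hT.le) ha)
      (hgsub a b ha hb)
    simp only [hzdef]
    linarith [this]
  have hWsplit : ∀ a b : ℝ, a ∈ Set.Icc (0:ℝ) T → b ∈ Set.Icc (0:ℝ) T →
      W b = W a + ∫ s in a..b, V s := by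
    intro a b ha hb
    have := integral_add_adjacent_intervals (hVsub 0 a (Set.left_mem_Icc.2 hT.le) ha)
      (hVsub a b ha hb)
    simp only [hWdef]
    linarith [this]
  -- monotonicity
  have hzmono : ∀ a b : ℝ, a ∈ Set.Icc (0:ℝ) T → b ∈ Set.Icc (0:ℝ) T → a ≤ b →
      z a ≤ z b := by
    intro a b ha hb hab
    rw [hzsplit a b ha hb]
    have : 0 ≤ ∫ s in a..b, g s :=
      integral_nonneg hab (fun u hu => hg0 u ⟨le_trans ha.1 hu.1, le_trans hu.2 hb.2⟩)
    linarith
  have hWmono : ∀ a b : ℝ, a ∈ Set.Icc (0:ℝ) T → b ∈ Set.Icc (0:ℝ) T → a ≤ b →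
      W a ≤ W b := by
    intro a b ha hb hab
    rw [hWsplit a b ha hb]
    have : 0 ≤ ∫ s in a..b, V s :=
      integral_nonneg hab (fun u hu => hV0 u ⟨le_trans ha.1 hu.1, le_trans hu.2 hb.2⟩)
    linarith
  have hz0 : z 0 = 2 := by simp [hzdef]
  have hW0 : W 0 = 0 := by simp [hWdef]
  have hz2 : ∀ t ∈ Set.Icc (0:ℝ) T, 2 ≤ z t := by
    intro t ht
    have := hzmono 0 t (Set.left_mem_Icc.2 hT.le) ht ht.1
    rw [hz0] at this; exact this
  have hWnn : ∀ t ∈ Set.Icc (0:ℝ) T, 0 ≤ W t := by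
    intro t ht
    have := hWmono 0 t (Set.left_mem_Icc.2 hT.le) ht ht.1
    rw [hW0] at this; exact this
  have hWA : ∀ t ∈ Set.Icc (0:ℝ) T, W t ≤ A := by
    intro t ht
    have h1 := hWmono t T ht (Set.right_mem_Icc.2 hT.le) ht.2
    exact le_trans h1 hVA
  have hψ2 : ∀ t ∈ Set.Icc (0:ℝ) T, 2 ≤ ψ t := by
    intro t ht
    have : (1:ℝ) ≤ Real.exp (4 * C * W t) := by
      rw [← Real.exp_zero]
      exact Real.exp_le_exp.2 (mul_nonneg (by positivity) (hWnn t ht))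
    simp only [hψdef]; nlinarith
  -- continuity
  have hzc : ContinuousOn z (Set.Icc 0 T) := by
    have := intervalIntegral.continuousOn_primitive_interval'
      (μ := volume) (f := g) (b₁ := 0) (b₂ := T) hVy (by rw [huIcc]; exact Set.left_mem_Icc.2 hT.le)
    rw [huIcc] at this
    exact continuousOn_const.add this
  have hWc : ContinuousOn W (Set.Icc 0 T) := by
    have := intervalIntegral.continuousOn_primitive_interval'
      (μ := volume) (f := V) (b₁ := 0) (b₂ := T) hV (by rw [huIcc]; exact Set.left_mem_Icc.2 hT.le)
    rw [huIcc] at this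
    exact this
  have hψc : ContinuousOn ψ (Set.Icc 0 T) := by
    exact continuousOn_const.mul (Real.continuous_exp.comp_continuousOn
      (continuousOn_const.mul hWc))
  have hlogzc : ContinuousOn (fun t => Real.log (z t)) (Set.Icc 0 T) :=
    hzc.log (fun t ht => by linarith [hz2 t ht])
  -- key integral inequality
  have hkey2 : ∀ x t : ℝ, x ∈ Set.Icc (0:ℝ) T → t ∈ Set.Icc (0:ℝ) T → x ≤ t →
      z t ≤ z x + C * (W t - W x) * (z t * Real.log (z t)) := by
    intro x t hx ht hxt
    have hzt2 : 2 ≤ z t := hz2 t ht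
    have hlogt : 0 ≤ Real.log (z t) := Real.log_nonneg (by linarith)
    have hmono : ∫ s in x..t, g s ≤ ∫ s in x..t, V s * (C * (z t * Real.log (z t))) := by
      refine integral_mono_on hxt (hgsub x t hx ht)
        ((hVsub x t hx ht).mul_const _) ?_
      intro s hs
      have hsI : s ∈ Set.Icc (0:ℝ) T := ⟨le_trans hx.1 hs.1, le_trans hs.2 ht.2⟩
      have h1 : y s ≤ C * z s * Real.log (z s) := hkey s hsI
      have hzs2 : 2 ≤ z s := hz2 s hsI
      have hzst : z s ≤ z t := hzmono s t hsI ht hs.2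
      have hlogs : Real.log (z s) ≤ Real.log (z t) :=
        Real.log_le_log (by linarith) hzst
      have hlogs0 : 0 ≤ Real.log (z s) := Real.log_nonneg (by linarith)
      have h2 : C * z s * Real.log (z s) ≤ C * (z t * Real.log (z t)) := by
        have h3 : z s * Real.log (z s) ≤ z t * Real.log (z t) :=
          mul_le_mul hzst hlogs hlogs0 (by linarith)
        calc C * z s * Real.log (z s) = C * (z s * Real.log (z s)) := by ring
          _ ≤ C * (z t * Real.log (z t)) := mul_le_mul_of_nonneg_left h3 hC.le
      calc g s = V s * y s := rfl
        _ ≤ V s * (C * z s * Real.log (z s)) :=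
            mul_le_mul_of_nonneg_left (le_trans h1 (le_refl _)) (hV0 s hsI)
        _ ≤ V s * (C * (z t * Real.log (z t))) :=
            mul_le_mul_of_nonneg_left h2 (hV0 s hsI)
    have hint : ∫ s in x..t, V s * (C * (z t * Real.log (z t)))
        = (∫ s in x..t, V s) * (C * (z t * Real.log (z t))) :=
      intervalIntegral.integral_mul_const _ _
    have hzs := hzsplit x t hx ht
    have hWs := hWsplit x t hx ht
    have hVint : (∫ s in x..t, V s) = W t - W x := by linarith
    rw [hint, hVint] at hmono
    have hre : (W t - W x) * (C * (z t * Real.log (z t)))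
        = C * (W t - W x) * (z t * Real.log (z t)) := by ring
    linarith [hmono, hzs, hre.le, hre.ge]
  -- continuous induction
  have main : Set.Icc (0:ℝ) T ⊆ {t | Real.log (z t) ≤ ψ t} := by
    apply IsClosed.Icc_subset_of_forall_exists_gt
    · have : {t | Real.log (z t) ≤ ψ t} ∩ Set.Icc 0 T
          = Set.Icc (0:ℝ) T ∩ (fun t => ψ t - Real.log (z t)) ⁻¹' Set.Ici 0 := by
        ext u; simp [Set.mem_setOf_eq, and_comm, sub_nonneg]
      rw [this]
      exact (hψc.sub hlogzc).preimage_isClosed_of_isClosed isClosed_Icc isClosed_Ici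
    · show Real.log (z 0) ≤ ψ 0
      rw [hz0]
      have : ψ 0 = 2 := by simp [hψdef, hW0]
      rw [this]
      linarith [Real.log_le_sub_one_of_pos (by norm_num : (0:ℝ) < 2)]
    · rintro x ⟨hxs, hx0, hxT⟩ yy hyy
      have hxI : x ∈ Set.Icc (0:ℝ) T := ⟨hx0, hxT.le⟩
      -- find t ∈ Ioc x yy, t ≤ T, with z t ≤ z x + 1
      haveI hF : (𝓝[>] x).NeBot := nhdsGT_neBot x
      have h1 : {t | z t < z x + 1} ∈ 𝓝[>] x := by
        have hcw : ContinuousWithinAt z (Set.Icc 0 T) x := hzc x hxI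
        have : {t | z t < z x + 1} ∈ 𝓝[Set.Icc 0 T] x :=
          hcw (Iio_mem_nhds (by linarith))
        have hle : 𝓝[>] x ≤ 𝓝[Set.Icc 0 T] x := by
          rw [← nhdsWithin_Ioc_eq_nhdsGT hxT]
          exact nhdsWithin_mono x (fun u hu => ⟨le_trans hx0 hu.1.le, hu.2⟩)
        exact hle this
      have h2 : Set.Ioc x T ∈ 𝓝[>] x :=
        Ioc_mem_nhdsGT_of_mem ⟨le_refl x, hxT⟩
      have h3 : Set.Iio yy ∈ 𝓝[>] x := nhdsWithin_le_nhds (Iio_mem_nhds hyy)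
      obtain ⟨t, ⟨htz, htT⟩, htyy⟩ :=
        Filter.nonempty_of_mem (Filter.inter_mem (Filter.inter_mem h1 h2) h3)
      have htI : t ∈ Set.Icc (0:ℝ) T := ⟨le_trans hx0 htT.1.le, htT.2⟩
      refine ⟨t, ?_, htT.1, htyy.le⟩
      -- show log z t ≤ ψ t
      show Real.log (z t) ≤ ψ t
      by_contra hcon
      push_neg at hcon
      set δ : ℝ := W t - W x with hδdef
      have hδ0 : 0 ≤ δ := sub_nonneg.2 (hWmono x t hxI htI htT.1.le)
      have hψx2 : 2 ≤ ψ x := hψ2 x hxI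
      have hzx : z x ≤ Real.exp (ψ x) := by
        have h := hxs
        simp only [Set.mem_setOf_eq] at h
        calc z x = Real.exp (Real.log (z x)) :=
              (Real.exp_log (by linarith [hz2 x hxI])).symm
          _ ≤ Real.exp (ψ x) := Real.exp_le_exp.2 h
      have hE1 : (1:ℝ) ≤ Real.exp (ψ x) := by
        rw [← Real.exp_zero]; exact Real.exp_le_exp.2 (by linarith)
      have hzt2E : z t ≤ 2 * Real.exp (ψ x) := by
        have := htz; simp only [Set.mem_setOf_eq] at this; linarith
      have hzt2 : 2 ≤ z t := hz2 t htI
      have hlogzt : Real.log (z t) ≤ Real.log 2 + ψ x := by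
        calc Real.log (z t) ≤ Real.log (2 * Real.exp (ψ x)) :=
              Real.log_le_log (by linarith) hzt2E
          _ = Real.log 2 + ψ x := by
              rw [Real.log_mul (by norm_num) (by positivity), Real.log_exp]
      have hlogzt0 : 0 ≤ Real.log (z t) := Real.log_nonneg (by linarith)
      -- upper bound from key inequality
      have hub : z t ≤ Real.exp (ψ x)
          + C * δ * (2 * Real.exp (ψ x) * (Real.log 2 + ψ x)) := by
        have h := hkey2 x t hxI htI htT.1.le
        have hprod : z t * Real.log (z t) ≤ 2 * Real.exp (ψ x) * (Real.log 2 + ψ x) := by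
          nlinarith
        have hCδ' : 0 ≤ C * δ := mul_nonneg hC.le hδ0
        have h5 : C * δ * (z t * Real.log (z t))
            ≤ C * δ * (2 * Real.exp (ψ x) * (Real.log 2 + ψ x)) :=
          mul_le_mul_of_nonneg_left hprod hCδ'
        have h' : z t ≤ z x + C * δ * (z t * Real.log (z t)) := by
          rw [hδdef]; exact h
        linarith [h', hzx, h5]
      -- lower bound from negation
      have hψt : ψ t = ψ x * Real.exp (4 * C * δ) := by
        have : W t = W x + δ := by simp [hδdef]
        simp only [hψdef, this]
        rw [show 4 * C * (W x + δ) = 4 * C * W x + 4 * C * δ by ring, Real.exp_add]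
        ring
      have hlb : Real.exp (ψ x) * (1 + 4 * C * δ * ψ x) ≤ Real.exp (ψ t) := by
        have he1 : 4 * C * δ ≤ Real.exp (4 * C * δ) - 1 := by
          linarith [Real.add_one_le_exp (4 * C * δ)]
        have h2 : ψ x + ψ x * (4 * C * δ) ≤ ψ x * Real.exp (4 * C * δ) := by
          nlinarith
        calc Real.exp (ψ x) * (1 + 4 * C * δ * ψ x)
            ≤ Real.exp (ψ x) * Real.exp (ψ x * (4 * C * δ)) := by
              have := Real.add_one_le_exp (ψ x * (4 * C * δ))
              have hex : 0 < Real.exp (ψ x) := Real.exp_pos _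
              nlinarith
          _ = Real.exp (ψ x + ψ x * (4 * C * δ)) := (Real.exp_add _ _).symm
          _ ≤ Real.exp (ψ t) := by
              rw [hψt]; exact Real.exp_le_exp.2 (by nlinarith)
      have hneg : Real.exp (ψ t) < z t := by
        calc Real.exp (ψ t) < Real.exp (Real.log (z t)) := Real.exp_lt_exp.2 hcon
          _ = z t := Real.exp_log (by linarith)
      -- contradiction
      have hlog2 : Real.log 2 ≤ 1 := by
        have := Real.log_le_sub_one_of_pos (by norm_num : (0:ℝ) < 2)
        linarith
      have hex : 0 < Real.exp (ψ x) := Real.exp_pos _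
      have hCδ : 0 ≤ C * δ := mul_nonneg hC.le hδ0
      have h4 : (0:ℝ) ≤ ψ x - Real.log 2 := by linarith
      nlinarith [hlb, hneg, hub, mul_nonneg (mul_nonneg hCδ hex.le) h4]
  -- conclusion
  intro t ht
  have hlog : Real.log (z t) ≤ ψ t := main ht
  have hzt2 : 2 ≤ z t := hz2 t ht
  have hψt0 : 0 ≤ ψ t := by linarith [hψ2 t ht]
  have hψΨ : ψ t ≤ Ψ := by
    simp only [hψdef, hΨdef]
    have : Real.exp (4 * C * W t) ≤ Real.exp (4 * C * A) :=
      Real.exp_le_exp.2 (by nlinarith [hWA t ht])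
    linarith
  have hzt : z t ≤ Real.exp (ψ t) := by
    calc z t = Real.exp (Real.log (z t)) := (Real.exp_log (by linarith)).symm
      _ ≤ Real.exp (ψ t) := Real.exp_le_exp.2 hlog
  have hlog0 : 0 ≤ Real.log (z t) := Real.log_nonneg (by linarith)
  have hexmono : Real.exp (ψ t) ≤ Real.exp Ψ := Real.exp_le_exp.2 hψΨ
  have h1 : y t ≤ C * z t * Real.log (z t) := hkey t ht
  have hex0 : 0 < Real.exp (ψ t) := Real.exp_pos _
  have s1 : z t * Real.log (z t) ≤ Real.exp (ψ t) * ψ t :=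
    mul_le_mul hzt hlog hlog0 hex0.le
  have s2 : Real.exp (ψ t) * ψ t ≤ Real.exp Ψ * Ψ :=
    mul_le_mul hexmono hψΨ hψt0 (Real.exp_pos _).le
  calc y t ≤ C * z t * Real.log (z t) := h1
    _ = C * (z t * Real.log (z t)) := by ring
    _ ≤ C * (Real.exp Ψ * Ψ) := mul_le_mul_of_nonneg_left (s1.trans s2) hC.le
    _ = C * Real.exp Ψ * Ψ := by ring
end
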